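/- Fix reals α, β with 0 ≤ α < 1 and β > 2. For every word w in the language 𝓛 of Σ there exists a word u ∈ 𝓛 such that for every x ∈ Σ the concatenated sequence w u x belongs to Σ. -/

import Mathlib

noncomputable section

namespace IntermediateBeta

/-- The intermediate beta transformation `x ↦ βx + α mod 1`. -/
def F (α β : ℝ) (x : ℝ) : ℝ := Int.fract (β * x + α)

/-- The digit sequence of a point: `Om α β x n` is the index `i` with `F^[n] x ∈ J_i`.
For `y ∈ [0,1)` we have `y ∈ J_i ↔ ⌊β y + α⌋ = i`. -/
def Om (α β : ℝ) (x : ℝ) : ℕ → ℕ := fun n => (⌊β * ((F α β)^[n] x) + α⌋).toNat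

/-- `ℓ = ⌈α + β⌉ - 1`. -/
def ell (α β : ℝ) : ℕ := ⌈α + β⌉₊ - 1

/-- The subshift `Σ`: closure (in the product topology) of the set of digit sequences
of points of `[0,1)`. -/
def Sig (α β : ℝ) : Set (ℕ → ℕ) := closure (Om α β '' Set.Ico (0 : ℝ) 1)

/-- The shift map. -/
def shift (x : ℕ → ℕ) : ℕ → ℕ := fun n => x (n + 1)

/-- Lexicographic order on one-sided sequences. -/
def lexLe (x y : ℕ → ℕ) : Prop := x = y ∨ ∃ k, (∀ i < k, x i = y i) ∧ x k < y k

/-- The language of a subset `S` of the full shift: the finite words occurring as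
initial segments of elements of `S`. -/
def langOf (S : Set (ℕ → ℕ)) (w : List ℕ) : Prop :=
  ∃ x ∈ S, ∀ i : Fin w.length, x i = w.get i

/-- Membership in the language `𝓛` of the subshift `Σ`. -/
def inLang (α β : ℝ) (w : List ℕ) : Prop := langOf (Sig α β) w

/-- The tail segment of `w` of length `k` agrees with the initial segment of `s`
of length `k`. -/
def tailAgrees (s : ℕ → ℕ) (w : List ℕ) (k : ℕ) : Prop :=
  k ≤ w.length ∧ ∀ i < k, w.getD (w.length - k + i) 0 = s i

/-- `kmax s w` is the length of the longest tail segment of `w` agreeing with an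
initial segment of `s` (`k₁(w)` when `s = a`, `k₂(w)` when `s = b`). -/
def kmax (s : ℕ → ℕ) (w : List ℕ) : ℕ := sSup {k | tailAgrees s w k}

/-- `D a b` is the set of lengths `n` such that the initial segment of `b` of
length `n` occurs somewhere in `a`.  Thus `D a b` is the set `𝖣(a)` of the paper
and `D b a` is `𝖣(b)`. -/
def D (a b : ℕ → ℕ) : Set ℕ := {n | ∃ j, ∀ i < n, b i = a (j + i)}

/-- Gluing of the words `w 0, v 0, w 1, v 1, …, v (n-1), w n`. -/
def glue {n : ℕ} (w : Fin (n + 1) → List ℕ) (v : Fin n → List ℕ) : List ℕ :=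
  (List.ofFn fun i : Fin n => w i.castSucc ++ v i).flatten ++ w (Fin.last n)

/-- A collection `G` of words inside the language `lang` has specification: there
is `τ ∈ ℕ` such that any finite list of words of `G` can be glued, with gluing
words from `lang` of length `τ`, into a word of `lang`. -/
def HasSpec (lang G : List ℕ → Prop) : Prop :=
  ∃ τ : ℕ, 1 ≤ τ ∧ ∀ n : ℕ, ∀ w : Fin (n + 1) → List ℕ, (∀ i, G (w i)) →
    ∃ v : Fin n → List ℕ, (∀ i, (v i).length = τ ∧ lang (v i)) ∧ lang (glue w v)

/-- The initial segment of a sequence, as a finite word. -/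
def pre (s : ℕ → ℕ) (n : ℕ) : List ℕ := List.ofFn fun i : Fin n => s i

/-- Lexicographic order for finite words (of equal length). -/
def wordLe (u v : List ℕ) : Prop :=
  u = v ∨ ∃ k, (∀ i < k, u.getD i 0 = v.getD i 0) ∧ u.getD k 0 < v.getD k 0

/-- Concatenation of a finite word with an infinite sequence. -/
def wcat (w : List ℕ) (x : ℕ → ℕ) : ℕ → ℕ := fun n =>
  if h : n < w.length then w.get ⟨n, h⟩ else x (n - w.length)

/-- All `y ∈ [a,b)` are reached by a `w`-cylinder point after `|w|` steps. -/
def Reach (α β : ℝ) (w : List ℕ) (a b : ℝ) : Prop :=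
  ∀ y, a ≤ y → y < b → ∃ z, 0 ≤ z ∧ z < 1 ∧ (F α β)^[w.length] z = y ∧
    ∀ i < w.length, Om α β z i = w.getD i 0

lemma F_mem (α β z : ℝ) : F α β z ∈ Set.Ico (0:ℝ) 1 :=
  ⟨Int.fract_nonneg _, Int.fract_lt_one _⟩

lemma iter_mem (α β : ℝ) {z : ℝ} (hz : z ∈ Set.Ico (0:ℝ) 1) (n : ℕ) :
    (F α β)^[n] z ∈ Set.Ico (0:ℝ) 1 := by
  induction n with
  | zero => exact hz

  | succ n _ => rw [Function.iterate_succ_apply']; exact F_mem α β _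

lemma Om_shift (α β z : ℝ) (n i : ℕ) :
    Om α β ((F α β)^[n] z) i = Om α β z (i + n) := by
  unfold Om
  rw [← Function.iterate_add_apply]

lemma reach_step (α β : ℝ) (w : List ℕ) (a b a' b' : ℝ) (s : ℕ)
    (hβ0 : 0 < β)
    (h : Reach α β w a b) (haa : a ≤ a') (hab : a' < b') (hbb : b' ≤ b)
    (hfloor : ∀ y, a' ≤ y → y < b' → ⌊β * y + α⌋ = (s : ℤ)) :
    Reach α β (w ++ [s]) (β * a' + α - s) (β * b' + α - s) := by
  intro y' hy1 hy2
  set y : ℝ := (y' + s - α) / β with hy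
  have hb : β ≠ 0 := ne_of_gt hβ0
  have hyb : β * y + α = y' + s := by rw [hy]; field_simp; ring
  have hy1' : a' ≤ y := by
    rw [hy, le_div_iff₀ hβ0]; nlinarith
  have hy2' : y < b' := by
    rw [hy, div_lt_iff₀ hβ0]; nlinarith
  obtain ⟨z, hz0, hz1, hzit, hzpre⟩ := h y (haa.trans hy1') (hy2'.trans_le hbb)
  have hfl : ⌊β * y + α⌋ = (s : ℤ) := hfloor y hy1' hy2'
  refine ⟨z, hz0, hz1, ?_, ?_⟩
  · have hlen : (w ++ [s]).length = w.length + 1 := by simp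
    rw [hlen, Function.iterate_succ_apply', hzit]
    show Int.fract (β * y + α) = y'
    rw [Int.fract, hfl, hyb]; push_cast; ring
  · intro i hi
    rcases lt_or_eq_of_le (Nat.lt_succ_iff.mp (by simpa using hi)) with h' | h'
    · rw [List.getD_append _ _ _ _ h']
      exact hzpre i h'
    · subst h'
      rw [List.getD_append_right _ _ _ _ (le_refl _)]
      simp only [Nat.sub_self, List.getD]
      show Om α β z w.length = s
      unfold Om
      rw [hzit, hfl]
      simp

lemma reach_pre (α β : ℝ) (hα0 : 0 ≤ α) (hβ0 : 0 < β) :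
    ∀ n : ℕ, ∀ z : ℝ, 0 ≤ z → z < 1 →
    ∃ a b : ℝ, 0 ≤ a ∧ a ≤ (F α β)^[n] z ∧ (F α β)^[n] z < b ∧ b ≤ 1 ∧
      Reach α β (pre (Om α β z) n) a b := by
  intro n
  induction n with
  | zero =>
    intro z hz0 hz1
    exact ⟨0, 1, le_refl _, hz0, hz1, le_refl _, by
      intro y hy0 hy1
      exact ⟨y, hy0, hy1, rfl, by simp [pre]⟩⟩
  | succ n ih =>
    intro z hz0 hz1
    obtain ⟨a, b, ha0, hay, hyb, hb1, hR⟩ := ih z hz0 hz1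
    set y₀ : ℝ := (F α β)^[n] z with hy₀
    have hy₀m : y₀ ∈ Set.Ico (0:ℝ) 1 := iter_mem α β ⟨hz0, hz1⟩ n
    have hnn : (0:ℝ) ≤ β * y₀ + α := by nlinarith [hy₀m.1]
    set sZ : ℤ := ⌊β * y₀ + α⌋ with hsZ
    have hsZ0 : 0 ≤ sZ := Int.floor_nonneg.mpr hnn
    set s : ℕ := sZ.toNat with hs
    have hcast : ((s : ℤ) : ℝ) = (sZ : ℝ) := by
      rw [hs, Int.toNat_of_nonneg hsZ0]
    have hfl_le : ((s:ℕ):ℝ) ≤ β * y₀ + α := by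
      rw [show ((s:ℕ):ℝ) = ((s:ℤ):ℝ) by push_cast; ring, hcast]
      exact Int.floor_le _
    have hfl_lt : β * y₀ + α < (s:ℕ) + 1 := by
      rw [show ((s:ℕ):ℝ) = ((s:ℤ):ℝ) by push_cast; ring, hcast]
      exact Int.lt_floor_add_one _
    set a' : ℝ := max a (((s:ℕ) - α)/β) with ha'
    set b' : ℝ := min b (((s:ℕ) + 1 - α)/β) with hb'
    have ha'y : a' ≤ y₀ := by
      apply max_le hay
      rw [div_le_iff₀ hβ0]; nlinarith
    have hyb' : y₀ < b' := by
      apply lt_min hyb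
      rw [lt_div_iff₀ hβ0]; nlinarith
    have hfloor : ∀ y, a' ≤ y → y < b' → ⌊β * y + α⌋ = ((s:ℕ) : ℤ) := by
      intro y hy1 hy2
      have h1 : ((s:ℕ):ℝ) ≤ β * y + α := by
        have : ((s:ℕ) - α)/β ≤ y := le_trans (le_max_right _ _) hy1
        rw [div_le_iff₀ hβ0] at this; nlinarith
      have h2 : β * y + α < (s:ℕ) + 1 := by
        have : y < ((s:ℕ) + 1 - α)/β := lt_of_lt_of_le hy2 (min_le_right _ _)
        rw [lt_div_iff₀ hβ0] at this; nlinarith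
      rw [Int.floor_eq_iff]
      refine ⟨by exact_mod_cast h1, by push_cast; exact h2⟩
    have hstep := reach_step α β (pre (Om α β z) n) a b a' b' s hβ0 hR
      (le_max_left _ _) (lt_of_le_of_lt ha'y hyb') (min_le_left _ _) hfloor
    have hOm : Om α β z n = s := rfl
    have hpre : pre (Om α β z) (n+1) = pre (Om α β z) n ++ [s] := by
      rw [pre, pre, List.ofFn_succ', List.concat_eq_append]
      simp only [Fin.coe_castSucc, Fin.val_last, hOm]
    rw [← hpre] at hstep
    have hF1 : (F α β)^[n+1] z = β * y₀ + α - (s:ℕ) := by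
      rw [Function.iterate_succ_apply', ← hy₀]
      show Int.fract (β * y₀ + α) = _
      rw [Int.fract]
      rw [show ((s:ℕ):ℝ) = ((s:ℤ):ℝ) by push_cast; ring, hcast, hsZ]
    refine ⟨β * a' + α - s, β * b' + α - s, ?_, ?_, ?_, ?_, hstep⟩
    · have : ((s:ℕ) - α)/β ≤ a' := le_max_right _ _
      rw [div_le_iff₀ hβ0] at this; nlinarith
    · rw [hF1]; nlinarith
    · rw [hF1]; nlinarith
    · have : b' ≤ ((s:ℕ) + 1 - α)/β := min_le_right _ _
      rw [le_div_iff₀ hβ0] at this; nlinarith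

lemma floor_nat_le (x : ℝ) (hx : 0 ≤ x) :
    ((⌊x⌋.toNat : ℝ)) ≤ x ∧ x < (⌊x⌋.toNat : ℝ) + 1 := by
  have h0 : 0 ≤ ⌊x⌋ := Int.floor_nonneg.mpr hx
  have hc : ((⌊x⌋.toNat : ℝ)) = ((⌊x⌋ : ℤ) : ℝ) := by
    exact_mod_cast congrArg (Int.cast : ℤ → ℝ) (Int.toNat_of_nonneg h0)
  exact ⟨hc ▸ Int.floor_le x, hc ▸ Int.lt_floor_add_one x⟩

lemma floor_eq_of_between (x : ℝ) (s : ℕ) (h1 : (s:ℝ) ≤ x) (h2 : x < (s:ℝ) + 1) :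
    ⌊x⌋ = (s : ℤ) := by
  rw [Int.floor_eq_iff]
  exact ⟨by exact_mod_cast h1, by push_cast; exact h2⟩

lemma full_step (α β : ℝ) (hα0 : 0 ≤ α) (hβ0 : 0 < β) (a b : ℝ) (w : List ℕ)
    (ha0 : 0 ≤ a) (s : ℕ) (hfl_le : (s:ℝ) ≤ β * a + α) (hfl_lt : β * a + α < (s:ℝ) + 1)
    (hwide : ((s:ℝ) + 1 - α)/β + 1/β ≤ b)
    (h : Reach α β w a b) : ∃ t : ℕ, Reach α β (w ++ [t]) 0 1 := by
  obtain ⟨r, hr⟩ : ∃ r : ℝ, r = ((s:ℝ) + 1 - α)/β := ⟨_, rfl⟩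
  have hbr : β * r = (s:ℝ) + 1 - α := by rw [hr]; field_simp
  have har : a ≤ r := by rw [hr, le_div_iff₀ hβ0]; nlinarith
  have hfloor : ∀ y, r ≤ y → y < r + 1/β → ⌊β * y + α⌋ = ((s+1 : ℕ) : ℤ) := by
    intro y hy1 hy2
    apply floor_eq_of_between
    · push_cast; nlinarith
    · push_cast
      have : β * y < β * (r + 1/β) := by nlinarith
      rw [mul_add, hbr] at this
      have hb1 : β * (1/β) = 1 := by field_simp
      rw [hb1] at this; linarith
  have hstep := reach_step α β w a b r (r + 1/β) (s+1) hβ0 h har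
    (lt_add_of_pos_right r (by positivity)) (by rw [hr]; exact hwide) hfloor
  refine ⟨s+1, ?_⟩
  have e0 : β * r + α - ((s+1 : ℕ) : ℝ) = 0 := by push_cast; rw [hbr]; ring
  have e1 : β * (r + 1/β) + α - ((s+1 : ℕ) : ℝ) = 1 := by
    have hb1 : β * (1/β) = 1 := by field_simp
    push_cast; rw [mul_add, hbr, hb1]; ring
  rwa [e0, e1] at hstep

lemma aux_len {p β a b A B : ℝ} (hp : 0 < p) (hβ0 : 0 < β)
    (h : 2/β < p * (β/2) * (b-a)) (hAB : β * ((b-a)/2) ≤ B - A) : 2/β < p * (B-A) := by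
  have h2 := mul_le_mul_of_nonneg_left hAB (le_of_lt hp)
  nlinarith

lemma reach_grow (α β : ℝ) (hα0 : 0 ≤ α) (hβ : 2 < β) :
    ∀ k : ℕ, ∀ a b : ℝ, ∀ w : List ℕ, 0 ≤ a → a < b → b ≤ 1 →
      2 / β < (β/2)^k * (b - a) → Reach α β w a b →
      ∃ u : List ℕ, Reach α β (w ++ u) 0 1 := by
  have hβ0 : (0:ℝ) < β := by linarith
  intro k
  induction k with
  | zero =>
    intro a b w ha0 hab hb1 hlen h
    rw [pow_zero, one_mul] at hlen
    have hnn : (0:ℝ) ≤ β * a + α := by nlinarith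
    obtain ⟨hfl_le, hfl_lt⟩ := floor_nat_le _ hnn
    have key : 2 < β * (b - a) := by
      have h2 : β * (2/β) = 2 := by field_simp
      have := mul_lt_mul_of_pos_left hlen hβ0
      rwa [h2] at this
    obtain ⟨s, hfl_le, hfl_lt⟩ : ∃ s : ℕ, (s:ℝ) ≤ β * a + α ∧ β * a + α < (s:ℝ) + 1 :=
      ⟨_, hfl_le, hfl_lt⟩
    have hwide : ((s:ℝ) + 1 - α)/β + 1/β ≤ b := by
      rw [← add_div, div_le_iff₀ hβ0]
      nlinarith
    obtain ⟨t, hR⟩ := full_step α β hα0 hβ0 a b w ha0 s hfl_le hfl_lt hwide h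
    exact ⟨[t], hR⟩
  | succ k ih =>
    intro a b w ha0 hab hb1 hlen h
    have hnn : (0:ℝ) ≤ β * a + α := by nlinarith
    obtain ⟨hfl_le, hfl_lt⟩ := floor_nat_le _ hnn
    obtain ⟨s, hfl_le, hfl_lt⟩ : ∃ s : ℕ, (s:ℝ) ≤ β * a + α ∧ β * a + α < (s:ℝ) + 1 :=
      ⟨_, hfl_le, hfl_lt⟩
    obtain ⟨r, hr⟩ : ∃ r : ℝ, r = ((s:ℝ) + 1 - α)/β := ⟨_, rfl⟩
    have hbrr : β * r = (s:ℝ) + 1 - α := by rw [hr]; field_simp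
    have har : a < r := by rw [hr, lt_div_iff₀ hβ0]; nlinarith
    have hpk : (0:ℝ) < (β/2)^k := by positivity
    rw [pow_succ] at hlen
    by_cases hwide : r + 1/β ≤ b
    · obtain ⟨t, hR⟩ := full_step α β hα0 hβ0 a b w ha0 s hfl_le hfl_lt (by rw [← hr]; exact hwide) h
      exact ⟨[t], hR⟩
    · push_neg at hwide
      by_cases hbr : b ≤ r
      · -- single cell [a, b)
        have hfloor : ∀ y, a ≤ y → y < b → ⌊β * y + α⌋ = (s : ℤ) := by
          intro y hy1 hy2
          apply floor_eq_of_between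
          · linarith [mul_le_mul_of_nonneg_left hy1 (le_of_lt hβ0)]
          · linarith [mul_lt_mul_of_pos_left (lt_of_lt_of_le hy2 hbr) hβ0, hbrr]
        have hstep := reach_step α β w a b a b s hβ0 h (le_refl a) hab (le_refl b) hfloor
        obtain ⟨u, hu⟩ := ih (β * a + α - s) (β * b + α - s) (w ++ [s])
          (by linarith) (by linarith [mul_lt_mul_of_pos_left hab hβ0])
          (by linarith [mul_le_mul_of_nonneg_left hbr (le_of_lt hβ0), hbrr])
          (aux_len hpk hβ0 hlen (by linarith [mul_pos hβ0 (sub_pos.mpr hab)])) hstep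
        exact ⟨[s] ++ u, by rwa [← List.append_assoc]⟩
      · push_neg at hbr
        by_cases hm : b - r ≤ r - a
        · -- left piece [a, r), cell s
          have hfloor : ∀ y, a ≤ y → y < r → ⌊β * y + α⌋ = (s : ℤ) := by
            intro y hy1 hy2
            apply floor_eq_of_between
            · linarith [mul_le_mul_of_nonneg_left hy1 (le_of_lt hβ0)]
            · linarith [mul_lt_mul_of_pos_left hy2 hβ0, hbrr]
          have hstep := reach_step α β w a b a r s hβ0 h (le_refl a) har (le_of_lt hbr) hfloor
          obtain ⟨u, hu⟩ := ih (β * a + α - s) (β * r + α - s) (w ++ [s])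
            (by linarith) (by linarith [mul_lt_mul_of_pos_left har hβ0])
            (by linarith)
            (aux_len hpk hβ0 hlen
              (by linarith [mul_le_mul_of_nonneg_left (show b - a ≤ 2*(r-a) by linarith) (le_of_lt hβ0)])) hstep
          exact ⟨[s] ++ u, by rwa [← List.append_assoc]⟩
        · push_neg at hm
          -- right piece [r, b), cell s+1
          have hb2 : β * b + α < (s:ℝ) + 2 := by
            have h2 : β * b < β * (r + 1/β) := mul_lt_mul_of_pos_left hwide hβ0
            have hb1 : β * (1/β) = 1 := by field_simp
            rw [mul_add, hbrr, hb1] at h2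
            linarith
          have hfloor : ∀ y, r ≤ y → y < b → ⌊β * y + α⌋ = ((s+1 : ℕ) : ℤ) := by
            intro y hy1 hy2
            apply floor_eq_of_between
            · push_cast
              linarith [mul_le_mul_of_nonneg_left hy1 (le_of_lt hβ0), hbrr]
            · push_cast
              linarith [mul_lt_mul_of_pos_left hy2 hβ0, hb2]
          have hstep := reach_step α β w a b r b (s+1) hβ0 h (le_of_lt har) hbr (le_refl b) hfloor
          obtain ⟨u, hu⟩ := ih (β * r + α - ((s+1:ℕ):ℝ)) (β * b + α - ((s+1:ℕ):ℝ)) (w ++ [(s+1:ℕ)])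
            (by push_cast; linarith [hbrr]) (by push_cast; linarith [mul_lt_mul_of_pos_left hbr hβ0])
            (by push_cast; linarith [hb2])
            (aux_len hpk hβ0 hlen
              (by push_cast
                  linarith [mul_le_mul_of_nonneg_left (show b - a ≤ 2*(b-r) by linarith) (le_of_lt hβ0)])) hstep
          exact ⟨[(s+1:ℕ)] ++ u, by rwa [← List.append_assoc]⟩


/-- **Corollary (symbolic full returns).** For `0 ≤ α < 1` and `β > 2`: for every
word `w ∈ 𝓛` there is a word `u ∈ 𝓛` such that `w u x ∈ Σ` for every `x ∈ Σ`. -/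
theorem exists_connecting_word (α β : ℝ) (hα0 : 0 ≤ α) (hα1 : α < 1) (hβ : 2 < β)
    (w : List ℕ) (hw : inLang α β w) :
    ∃ u : List ℕ, inLang α β u ∧ ∀ x ∈ Sig α β, wcat (w ++ u) x ∈ Sig α β := by
  classical
  have hβ0 : (0:ℝ) < β := by linarith
  obtain ⟨x, hxS, hxw⟩ := hw
  have hC : IsOpen {y : ℕ → ℕ | ∀ i : Fin w.length, y i = w.get i} := by
    have he : {y : ℕ → ℕ | ∀ i : Fin w.length, y i = w.get i}
        = ⋂ i : Fin w.length, (fun y : ℕ → ℕ => y (i:ℕ)) ⁻¹' {w.get i} := by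
      ext y; simp [Set.mem_iInter, Set.mem_preimage]
    rw [he]
    exact isOpen_iInter_of_finite fun i =>
      (continuous_apply ((i:ℕ))).isOpen_preimage _ (isOpen_discrete _)
  obtain ⟨y0, hy0C, hy0S⟩ := mem_closure_iff.mp hxS _ hC hxw
  obtain ⟨z, hzI, hzOm⟩ := hy0S
  have hwz : ∀ i : Fin w.length, Om α β z i = w.get i := by
    intro i; rw [hzOm]; exact hy0C i
  have hwpre : pre (Om α β z) w.length = w := by
    apply List.ext_getElem
    · simp [pre]
    · intro n h1 h2
      have h3 : n < w.length := h2
      have := hwz ⟨n, h3⟩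
      simpa [pre, List.getElem_ofFn, List.get_eq_getElem] using this
  obtain ⟨a, b, ha0, hay, hyb, hb1, hR⟩ := reach_pre α β hα0 hβ0 w.length z hzI.1 hzI.2
  rw [hwpre] at hR
  have hab : a < b := lt_of_le_of_lt hay hyb
  obtain ⟨k, hk⟩ := pow_unbounded_of_one_lt ((2/β)/(b-a)) (show (1:ℝ) < β/2 by linarith)
  have hcond : 2/β < (β/2)^k * (b-a) := by
    rw [div_lt_iff₀ (sub_pos.mpr hab)] at hk
    linarith
  obtain ⟨u, hu⟩ := reach_grow α β hα0 hβ k a b w ha0 hab hb1 hcond hR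
  have hlenW : (w ++ u).length = w.length + u.length := List.length_append
  refine ⟨u, ?_, ?_⟩
  · -- u ∈ 𝓛
    obtain ⟨z', hz'0, hz'1, _, hz'pre⟩ := hu 0 le_rfl one_pos
    have hz2 := iter_mem α β ⟨hz'0, hz'1⟩ w.length
    refine ⟨Om α β ((F α β)^[w.length] z'), subset_closure ⟨_, hz2, rfl⟩, ?_⟩
    intro i
    rw [Om_shift]
    have hi : (i:ℕ) + w.length < (w ++ u).length := by
      rw [hlenW]; omega
    rw [hz'pre _ hi, Nat.add_comm, List.getD_append_right _ _ _ _ (Nat.le_add_right _ _),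
      Nat.add_sub_cancel_left, List.getD_eq_getElem _ _ i.isLt, List.get_eq_getElem]
  · -- full return
    have hmain : ∀ y ∈ Set.Ico (0:ℝ) 1,
        wcat (w ++ u) (Om α β y) ∈ Om α β '' Set.Ico (0:ℝ) 1 := by
      intro y hy
      obtain ⟨z', h0, h1, hit, hpre⟩ := hu y hy.1 hy.2
      refine ⟨z', ⟨h0, h1⟩, ?_⟩
      funext i
      by_cases hi : i < (w ++ u).length
      · rw [wcat]
        simp only [hi, dif_pos]
        rw [hpre i hi, List.getD_eq_getElem _ _ hi, List.get_eq_getElem]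
      · push_neg at hi
        rw [wcat]
        rw [dif_neg (not_lt.mpr hi), ← hit, Om_shift, Nat.sub_add_cancel hi]
    have hcont : Continuous (wcat (w ++ u)) := by
      apply continuous_pi
      intro n
      by_cases hn : n < (w ++ u).length
      · have he : (fun x : ℕ → ℕ => wcat (w ++ u) x n) = fun _ => (w ++ u).get ⟨n, hn⟩ := by
          funext x; rw [wcat, dif_pos hn]
        rw [he]; exact continuous_const
      · have he : (fun x : ℕ → ℕ => wcat (w ++ u) x n)
            = fun x => x (n - (w ++ u).length) := by
          funext x; rw [wcat, dif_neg hn]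
        rw [he]; exact continuous_apply _
    intro x' hx'
    have h1 : wcat (w ++ u) x' ∈ closure (wcat (w ++ u) '' (Om α β '' Set.Ico (0:ℝ) 1)) :=
      image_closure_subset_closure_image hcont ⟨x', hx', rfl⟩
    have hsub : wcat (w ++ u) '' (Om α β '' Set.Ico (0:ℝ) 1) ⊆ Om α β '' Set.Ico (0:ℝ) 1 := by
      rintro _ ⟨_, ⟨y, hy, rfl⟩, rfl⟩
      exact hmain y hy
    exact closure_mono hsub h1

end IntermediateBeta
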